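/- ∑_{k=0}^∞ (30k − 7)·(−2)^k/C(4k,2k) = −(3π + 64)/6. -/

import Mathlib

open MeasureTheory intervalIntegral Real Set

lemma beta_nat : ∀ (b a : ℕ), ∫ x in (0:ℝ)..1, x ^ a * (1 - x) ^ b
    = (Nat.factorial a * Nat.factorial b : ℝ) / (Nat.factorial (a + b + 1)) := by
  intro b
  induction b with
  | zero =>
    intro a
    simp only [pow_zero, mul_one, integral_pow]
    have h : (Nat.factorial (a + 0 + 1) : ℝ) = (a + 1) * Nat.factorial a := by
      rw [show a + 0 + 1 = a + 1 by omega, Nat.factorial_succ]; push_cast; ring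
    rw [h]
    have h1 : ((a:ℝ) + 1) ≠ 0 := by positivity
    have h2 : (Nat.factorial a : ℝ) ≠ 0 := by exact_mod_cast Nat.factorial_ne_zero _
    rw [Nat.factorial_zero]
    field_simp
    simp
  | succ b ih =>
    intro a
    have key := integral_mul_deriv_eq_deriv_mul_of_hasDerivAt (a := (0:ℝ)) (b := 1)
      (u := fun x => (1 - x) ^ (b + 1)) (v := fun x => x ^ (a + 1) / (a + 1))
      (u' := fun x => -((b:ℝ) + 1) * (1 - x) ^ b) (v' := fun x => x ^ a)
      (by fun_prop) (by fun_prop)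
      (fun x _ => by
        have h := ((hasDerivAt_id x).const_sub 1).fun_pow (b + 1)
        simp only [id] at h
        convert h using 1
        push_cast
        ring
      )
      (fun x _ => by
        have h := (hasDerivAt_pow (a + 1) x).div_const ((a : ℝ) + 1)
        have ha : ((a : ℝ) + 1) ≠ 0 := by positivity
        convert h using 1
        push_cast
        field_simp
      )
      (Continuous.intervalIntegrable (by fun_prop) 0 1)
      (Continuous.intervalIntegrable (by fun_prop) 0 1)
    have h2 : ∫ x in (0:ℝ)..1, (1 - x) ^ (b + 1) * x ^ a
        = ((b : ℝ) + 1) / ((a : ℝ) + 1) * ∫ x in (0:ℝ)..1, x ^ (a + 1) * (1 - x) ^ b := by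
      rw [key]
      simp only [one_pow, sub_self, zero_pow (Nat.succ_ne_zero b)]
      rw [← intervalIntegral.integral_const_mul]
      simp only [zero_pow (Nat.succ_ne_zero a), zero_div, mul_zero, zero_mul, sub_zero,
        zero_sub, ← intervalIntegral.integral_neg]
      apply intervalIntegral.integral_congr
      intro x _
      have ha : ((a : ℝ) + 1) ≠ 0 := by positivity
      field_simp
    have h3 : ∫ x in (0:ℝ)..1, x ^ a * (1 - x) ^ (b + 1)
        = ((b : ℝ) + 1) / ((a : ℝ) + 1) * ∫ x in (0:ℝ)..1, x ^ (a + 1) * (1 - x) ^ b := by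
      rw [← h2]
      apply intervalIntegral.integral_congr
      intro x _
      ring
    rw [h3, ih (a + 1)]
    have hfa : (Nat.factorial (a + 1) : ℝ) = (a + 1) * Nat.factorial a := by
      rw [Nat.factorial_succ]; push_cast; ring
    have hfb : (Nat.factorial (b + 1) : ℝ) = (b + 1) * Nat.factorial b := by
      rw [Nat.factorial_succ]; push_cast; ring
    have he : a + 1 + b + 1 = a + (b + 1) + 1 := by omega
    rw [he] at *
    rw [hfa, hfb]
    have h1 : ((a:ℝ) + 1) ≠ 0 := by positivity
    have h4 : (Nat.factorial (a + (b + 1) + 1) : ℝ) ≠ 0 := by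
      exact_mod_cast Nat.factorial_ne_zero _
    field_simp

lemma arctan_sum_deriv (t s : ℝ) (hs : s ^ 2 = 2) :
    1 / (1 + (2*t - 1 + s) ^ 2) * 2 + 1 / (1 + (2*t - 1 - s) ^ 2) * 2
      = (2*t^2 - 2*t + 2) / (1 + 2 * (t * (1 - t)) ^ 2) := by
  have h1 : (1 + (2*t - 1 + s) ^ 2) ≠ 0 := by positivity
  have h2 : (1 + (2*t - 1 - s) ^ 2) ≠ 0 := by positivity
  have h3 : (1 + 2 * (t * (1 - t)) ^ 2) ≠ 0 := by positivity
  field_simp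
  linear_combination (-s^2 + t*(s^2 - 6) + t^2*(18 - s^2) - 24*t^3 + 12*t^4) * hs

lemma F_deriv (t : ℝ) : HasDerivAt (fun x : ℝ =>
      (16/3 - 5*x^1 + 61/3*x^2 - 140*x^3 + 590/3*x^4 - 278/3*x^5 + 14*x^6 - 4*x^7)
        / (1 + 2*(x*(1-x))^2)^2
      - Real.arctan (2*x - 1 + Real.sqrt 2) - Real.arctan (2*x - 1 - Real.sqrt 2))
    (111 / (1 + 2*(t*(1-t))^2) - 358 / (1 + 2*(t*(1-t))^2)^2
      + 240 / (1 + 2*(t*(1-t))^2)^3) t := by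
  have hs2 : Real.sqrt 2 ^ 2 = 2 := Real.sq_sqrt (by norm_num)
  have hA : HasDerivAt (fun x : ℝ =>
      16/3 - 5*x^1 + 61/3*x^2 - 140*x^3 + 590/3*x^4 - 278/3*x^5 + 14*x^6 - 4*x^7)
      (-5 + 122/3*t - 420*t^2 + 2360/3*t^3 - 1390/3*t^4 + 84*t^5 - 28*t^6) t := by
    have h := (((((((hasDerivAt_const t ((16:ℝ)/3)).fun_sub
      ((hasDerivAt_pow 1 t).const_mul (5:ℝ))).fun_add
      ((hasDerivAt_pow 2 t).const_mul ((61:ℝ)/3))).fun_sub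
      ((hasDerivAt_pow 3 t).const_mul (140:ℝ))).fun_add
      ((hasDerivAt_pow 4 t).const_mul ((590:ℝ)/3))).fun_sub
      ((hasDerivAt_pow 5 t).const_mul ((278:ℝ)/3))).fun_add
      ((hasDerivAt_pow 6 t).const_mul (14:ℝ))).fun_sub
      ((hasDerivAt_pow 7 t).const_mul (4:ℝ))
    refine h.congr_deriv ?_
    push_cast
    ring
  have hu : HasDerivAt (fun x : ℝ => x*(1-x)) (1 - 2*t) t := by
    have h := (hasDerivAt_id t).fun_mul ((hasDerivAt_id t).const_sub 1)
    simp only [id] at h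
    refine h.congr_deriv ?_
    ring
  have hD : HasDerivAt (fun x : ℝ => 1 + 2*(x*(1-x))^2)
      (4*(t*(1-t))*(1 - 2*t)) t := by
    have h := ((hu.fun_pow 2).const_mul (2:ℝ)).const_add 1
    refine h.congr_deriv ?_
    push_cast
    ring
  have hDne : (1 + 2*(t*(1-t))^2) ≠ 0 := by positivity
  have hQ := hA.fun_div (hD.fun_pow 2) (pow_ne_zero 2 hDne)
  have hl1 : HasDerivAt (fun x : ℝ => 2*x - 1 + Real.sqrt 2) 2 t := by
    have h := (((hasDerivAt_id t).const_mul (2:ℝ)).sub_const 1).add_const (Real.sqrt 2)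
    simpa using h
  have hl2 : HasDerivAt (fun x : ℝ => 2*x - 1 - Real.sqrt 2) 2 t := by
    have h := (((hasDerivAt_id t).const_mul (2:ℝ)).sub_const 1).sub_const (Real.sqrt 2)
    simpa using h
  have ha1 := (Real.hasDerivAt_arctan (2*t - 1 + Real.sqrt 2)).comp t hl1
  have ha2 := (Real.hasDerivAt_arctan (2*t - 1 - Real.sqrt 2)).comp t hl2
  have htot := (hQ.fun_sub ha1).fun_sub ha2
  refine htot.congr_deriv ?_
  have harc := arctan_sum_deriv t (Real.sqrt 2) hs2
  rw [sub_sub, harc]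
  field_simp
  ring

lemma sum_eval {t : ℝ} (h0 : 0 ≤ t) (h1 : t ≤ 1) :
    HasSum (fun k : ℕ => (30*(k:ℝ) - 7) * (4*(k:ℝ) + 1) * (-2*(t*(1-t))^2)^k)
      (111 / (1 + 2*(t*(1-t))^2) - 358 / (1 + 2*(t*(1-t))^2)^2
        + 240 / (1 + 2*(t*(1-t))^2)^3) := by
  have hu : 0 ≤ t*(1-t) := by nlinarith
  have hu4 : t*(1-t) ≤ 1/4 := by nlinarith [sq_nonneg (2*t-1)]
  have hwn : ‖(-2*(t*(1-t))^2 : ℝ)‖ < 1 := by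
    rw [Real.norm_eq_abs, abs_of_nonpos (by nlinarith)]
    nlinarith
  have hg := hasSum_geometric_of_norm_lt_one hwn
  have hc := hasSum_coe_mul_geometric_of_norm_lt_one hwn
  have hch := hasSum_choose_mul_geometric_of_norm_lt_one 2 hwn
  have hcomb := ((hch.mul_left 240).sub (hc.mul_left 358)).sub (hg.mul_left 247)
  have hfun : (fun k : ℕ => 240 * (((k+2).choose 2 : ℝ) * (-2*(t*(1-t))^2)^k)
      - 358 * ((k:ℝ) * (-2*(t*(1-t))^2)^k) - 247 * (-2*(t*(1-t))^2)^k)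
      = (fun k : ℕ => (30*(k:ℝ) - 7) * (4*(k:ℝ) + 1) * (-2*(t*(1-t))^2)^k) := by
    funext k
    rw [Nat.cast_choose_two]
    push_cast
    ring
  rw [hfun] at hcomb
  convert hcomb using 1
  · rfl
  have hDpos : (0:ℝ) < 1 - (-2*(t*(1-t))^2) := by nlinarith
  have hD : (1:ℝ) + 2*(t*(1-t))^2 = 1 - (-2*(t*(1-t))^2) := by ring
  rw [hD]
  have hDne : (1:ℝ) - (-2*(t*(1-t))^2) ≠ 0 := hDpos.ne'
  generalize hDdef : (1:ℝ) - (-2*(t*(1-t))^2) = D at *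
  rw [show (-2*(t*(1-t))^2 : ℝ) = 1 - D by linarith]
  field_simp
  ring

lemma integral_f (k : ℕ) :
    ∫ t in (0:ℝ)..1, (30*(k:ℝ) - 7) * (4*(k:ℝ) + 1) * (-2*(t*(1-t))^2)^k
      = (30*(k:ℝ) - 7) * (-2)^k / (Nat.choose (4*k) (2*k) : ℝ) := by
  have h1 : ∀ t : ℝ, (30*(k:ℝ) - 7) * (4*(k:ℝ) + 1) * (-2*(t*(1-t))^2)^k
      = ((30*(k:ℝ) - 7) * (4*(k:ℝ) + 1) * (-2)^k) * (t^(2*k) * (1-t)^(2*k)) := by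
    intro t
    rw [show (-2*(t*(1-t))^2 : ℝ) = (-2) * ((t*(1-t))^2) from by ring, mul_pow, ← pow_mul,
      mul_pow]
    ring
  simp only [h1]
  rw [intervalIntegral.integral_const_mul, beta_nat (2*k) (2*k),
    show 2*k + 2*k + 1 = 4*k + 1 from by omega]
  have hcf : (Nat.choose (4*k) (2*k) : ℝ) * (Nat.factorial (2*k)) * (Nat.factorial (2*k))
      = (Nat.factorial (4*k)) := by
    have h := Nat.choose_mul_factorial_mul_factorial (show 2*k ≤ 4*k by omega)
    rw [show 4*k - 2*k = 2*k from by omega] at h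
    exact_mod_cast congrArg Nat.cast h
  have hf1 : (Nat.factorial (4*k+1) : ℝ) = ((4:ℝ)*k+1) * Nat.factorial (4*k) := by
    rw [Nat.factorial_succ]; push_cast; ring
  have hne1 : (Nat.factorial (2*k) : ℝ) ≠ 0 := by
    exact_mod_cast Nat.factorial_ne_zero _
  have hne2 : (Nat.factorial (4*k) : ℝ) ≠ 0 := by
    exact_mod_cast Nat.factorial_ne_zero _
  have hne3 : (Nat.choose (4*k) (2*k) : ℝ) ≠ 0 := by
    have := Nat.choose_pos (show 2*k ≤ 4*k by omega)
    positivity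
  have hne4 : ((4:ℝ)*k+1) ≠ 0 := by positivity
  rw [hf1]
  field_simp
  linear_combination (30*(k:ℝ) - 7) * hcf

lemma integral_T : ∫ t in (0:ℝ)..1,
      (111 / (1 + 2*(t*(1-t))^2) - 358 / (1 + 2*(t*(1-t))^2)^2
        + 240 / (1 + 2*(t*(1-t))^2)^3) = -(3*Real.pi + 64)/6 := by
  have hD : Continuous (fun t : ℝ => 1 + 2*(t*(1-t))^2) := by fun_prop
  have hDne : ∀ t : ℝ, (1 + 2*(t*(1-t))^2) ≠ 0 := fun t => by positivity
  have hcont : Continuous (fun t : ℝ =>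
      111 / (1 + 2*(t*(1-t))^2) - 358 / (1 + 2*(t*(1-t))^2)^2
        + 240 / (1 + 2*(t*(1-t))^2)^3) :=
    ((continuous_const.div hD hDne).sub
      (continuous_const.div (hD.pow 2) (fun t => pow_ne_zero _ (hDne t)))).add
      (continuous_const.div (hD.pow 3) (fun t => pow_ne_zero _ (hDne t)))
  rw [intervalIntegral.integral_eq_sub_of_hasDerivAt (fun t _ => F_deriv t)
    (hcont.intervalIntegrable 0 1)]
  have hs2 : Real.sqrt 2 ^ 2 = 2 := Real.sq_sqrt (by norm_num)
  have hs0 : 0 ≤ Real.sqrt 2 := Real.sqrt_nonneg 2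
  have hsgt : 1 < Real.sqrt 2 := by nlinarith
  have hth : Real.arctan (Real.sqrt 2 - 1) = Real.pi/8 := by
    have hxy : (Real.sqrt 2 - 1) * (Real.sqrt 2 - 1) < 1 := by nlinarith
    have h := Real.arctan_add hxy
    rw [show (Real.sqrt 2 - 1 + (Real.sqrt 2 - 1))
        / (1 - (Real.sqrt 2 - 1)*(Real.sqrt 2 - 1)) = 1 from by
      rw [div_eq_one_iff_eq (by nlinarith)]
      nlinarith] at h
    rw [Real.arctan_one] at h
    linarith
  have hta : Real.arctan (1 + Real.sqrt 2) = Real.pi/2 - Real.pi/8 := by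
    have hpos : (0:ℝ) < 1 + Real.sqrt 2 := by linarith
    have hmul : (1 + Real.sqrt 2) * (Real.sqrt 2 - 1) = 1 := by linear_combination hs2
    have hinv : (1 + Real.sqrt 2)⁻¹ = Real.sqrt 2 - 1 := inv_eq_of_mul_eq_one_right hmul
    have h := Real.arctan_inv_of_pos hpos
    rw [hinv, hth] at h
    linarith
  rw [show (2*(1:ℝ) - 1 + Real.sqrt 2) = 1 + Real.sqrt 2 from by ring,
    show (2*(1:ℝ) - 1 - Real.sqrt 2) = -(Real.sqrt 2 - 1) from by ring,
    show (2*(0:ℝ) - 1 + Real.sqrt 2) = Real.sqrt 2 - 1 from by ring,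
    show (2*(0:ℝ) - 1 - Real.sqrt 2) = -(1 + Real.sqrt 2) from by ring,
    Real.arctan_neg, Real.arctan_neg, hta, hth]
  norm_num
  ring_nf

theorem stmt_15 :
    ∑' k : ℕ, (30 * (k : ℝ) - 7) * (-2) ^ k / (Nat.choose (4 * k) (2 * k) : ℝ) =
      -(3 * Real.pi + 64) / 6 := by
  set μ : Measure ℝ := volume.restrict (Set.Ioc (0:ℝ) 1) with hμ
  set f : ℕ → ℝ → ℝ :=
    fun k t => (30*(k:ℝ) - 7) * (4*(k:ℝ) + 1) * (-2*(t*(1-t))^2)^k with hfdef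
  have hcontf : ∀ k, Continuous (f k) := by
    intro k; fun_prop
  have hint : ∀ k, Integrable (f k) μ := fun k => (hcontf k).integrableOn_Ioc
  haveI : IsFiniteMeasure μ := by
    constructor
    rw [hμ, Measure.restrict_apply_univ, Real.volume_Ioc]
    norm_num
  have hbound : ∀ k : ℕ, ∀ t ∈ Set.Ioc (0:ℝ) 1,
      ‖‖f k t‖‖ ≤ 120*(k:ℝ)^2*(1/8)^k + 58*(k:ℝ)*(1/8)^k + 7*(1/8)^k := by
    intro k t ht
    have h0 : (0:ℝ) ≤ t := le_of_lt ht.1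
    have h1 : t ≤ 1 := ht.2
    have hu : 0 ≤ t*(1-t) := by nlinarith
    have hu4 : t*(1-t) ≤ 1/4 := by nlinarith [sq_nonneg (2*t-1)]
    have hw8 : |(-2*(t*(1-t))^2 : ℝ)| ≤ 1/8 := by
      rw [abs_of_nonpos (by nlinarith)]
      nlinarith
    rw [norm_norm, hfdef]
    simp only [Real.norm_eq_abs]
    rw [abs_mul, abs_pow]
    have hk0 : (0:ℝ) ≤ (k:ℝ) := Nat.cast_nonneg k
    have e1 : |(30*(k:ℝ) - 7) * (4*(k:ℝ) + 1)| ≤ 120*(k:ℝ)^2 + 58*(k:ℝ) + 7 := by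
      rw [abs_mul, abs_of_nonneg (by positivity : (0:ℝ) ≤ 4*(k:ℝ)+1)]
      have : |30*(k:ℝ) - 7| ≤ 30*(k:ℝ) + 7 := by
        rw [abs_le]; constructor <;> linarith
      nlinarith
    have e2 : |(-2*(t*(1-t))^2 : ℝ)| ^ k ≤ (1/8:ℝ)^k :=
      pow_le_pow_left₀ (abs_nonneg _) hw8 k
    calc |(30*(k:ℝ) - 7) * (4*(k:ℝ) + 1)| * |(-2*(t*(1-t))^2 : ℝ)| ^ k
        ≤ (120*(k:ℝ)^2 + 58*(k:ℝ) + 7) * (1/8:ℝ)^k := by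
          apply mul_le_mul e1 e2 (by positivity) (by positivity)
      _ = 120*(k:ℝ)^2*(1/8)^k + 58*(k:ℝ)*(1/8)^k + 7*(1/8)^k := by ring
  have hsummable : Summable (fun k : ℕ =>
      120*(k:ℝ)^2*(1/8)^k + 58*(k:ℝ)*(1/8)^k + 7*(1/8)^k) := by
    have h8 : ‖(1/8 : ℝ)‖ < 1 := by rw [Real.norm_eq_abs, abs_of_nonneg] <;> norm_num
    have s2 : Summable (fun k : ℕ => (k:ℝ)^2 * (1/8)^k) := by
      simpa using summable_pow_mul_geometric_of_norm_lt_one 2 h8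
    have s1 : Summable (fun k : ℕ => (k:ℝ) * (1/8)^k) := by
      simpa using summable_pow_mul_geometric_of_norm_lt_one 1 h8
    have s0 : Summable (fun k : ℕ => (1/8:ℝ)^k) :=
      summable_geometric_of_norm_lt_one h8
    have := ((s2.mul_left 120).add (s1.mul_left 58)).add (s0.mul_left 7)
    refine this.congr (fun k => ?_)
    ring
  have hnorm : Summable (fun k => ∫ t, ‖f k t‖ ∂μ) := by
    apply Summable.of_nonneg_of_le
      (fun k => integral_nonneg (fun t => norm_nonneg _))
      (fun k => ?_) hsummable
    have hle := norm_integral_le_of_norm_le_const (μ := μ)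
      (f := fun t => ‖f k t‖)
      (C := 120*(k:ℝ)^2*(1/8)^k + 58*(k:ℝ)*(1/8)^k + 7*(1/8)^k)
      (ae_restrict_of_forall_mem measurableSet_Ioc (hbound k))
    rw [Real.norm_of_nonneg (integral_nonneg (fun t => norm_nonneg _))] at hle
    have hμ1 : μ.real Set.univ = 1 := by
      rw [hμ, Measure.real, Measure.restrict_apply_univ, Real.volume_Ioc]
      norm_num
    rw [hμ1, mul_one] at hle
    exact hle
  have hkey := hasSum_integral_of_summable_integral_norm hint hnorm
  have hval : (∫ t, (∑' k, f k t) ∂μ) = -(3*Real.pi + 64)/6 := by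
    have hcongr : ∀ t ∈ Set.Ioc (0:ℝ) 1, (∑' k, f k t)
        = 111 / (1 + 2*(t*(1-t))^2) - 358 / (1 + 2*(t*(1-t))^2)^2
          + 240 / (1 + 2*(t*(1-t))^2)^3 := by
      intro t ht
      exact (sum_eval (le_of_lt ht.1) ht.2).tsum_eq
    rw [hμ]
    rw [setIntegral_congr_fun measurableSet_Ioc hcongr]
    rw [← intervalIntegral.integral_of_le (zero_le_one)]
    exact integral_T
  have hterm : ∀ k : ℕ, (∫ t, f k t ∂μ)
      = (30 * (k : ℝ) - 7) * (-2) ^ k / (Nat.choose (4 * k) (2 * k) : ℝ) := by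
    intro k
    rw [hμ, ← intervalIntegral.integral_of_le (zero_le_one)]
    exact integral_f k
  rw [hval] at hkey
  have := hkey.tsum_eq
  rw [← this]
  apply tsum_congr
  intro k
  exact (hterm k).symm
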